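/- Let C be an n×n circulant matrix and let C_{n-1} be the principal submatrix formed by its first n−1 rows and columns. Then C_{n-1} is a normal matrix if and only if all the eigenvalues of C lie on a straight line in the complex plane. -/

import Mathlib

open Polynomial Matrix Complex

lemma sum_pow_eq_ite (n : ℕ) (x : ℂ) (hx : x ^ n = 1) :
    ∑ j : Fin n, x ^ (j : ℕ) = if x = 1 then (n : ℂ) else 0 := by
  split_ifs with h
  · subst h; simp
  · rw [Fin.sum_univ_eq_sum_range]
    have h2 := geom_sum_mul x n
    rw [hx, sub_self] at h2
    rcases mul_eq_zero.mp h2 with h1 | h1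
    · exact h1
    · exact absurd (sub_eq_zero.mp h1) h

lemma pow_mod_eq (n : ℕ) (x : ℂ) (hx : x ^ n = 1) (a : ℕ) : x ^ (a % n) = x ^ a := by
  conv_rhs => rw [← Nat.div_add_mod a n]
  rw [pow_add, pow_mul, hx, one_pow, one_mul]

lemma circ_normal {n : ℕ} [NeZero n] (c : Fin n → ℂ) (C : Matrix (Fin n) (Fin n) ℂ)
    (hC : ∀ j k, C j k = c (k - j)) : C * Cᴴ = Cᴴ * C := by
  have h : C = Matrix.circulant (fun k => c (-k)) := by
    ext j k; rw [hC, Matrix.circulant_apply]; rw [neg_sub]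
  rw [h, Matrix.conjTranspose_circulant, Matrix.circulant_mul_comm]

lemma eval_charpoly_det {n : ℕ} (M : Matrix (Fin n) (Fin n) ℂ) (μ : ℂ) :
    (Matrix.charpoly M).eval μ = (μ • (1 : Matrix (Fin n) (Fin n) ℂ) - M).det := by
  rw [Matrix.charpoly, ← Polynomial.coe_evalRingHom, RingHom.map_det]
  congr 1
  ext i j
  by_cases h : i = j <;>
    simp [charmatrix_apply, Matrix.one_apply, Matrix.diagonal_apply, h]

section
variable {n : ℕ} [NeZero n]

lemma mulVec_eigen (c : Fin n → ℂ) (C : Matrix (Fin n) (Fin n) ℂ)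
    (hC : ∀ j k, C j k = c (k - j)) (ω : ℂ) (hω : ω ^ n = 1) (j : Fin n) :
    C *ᵥ (fun k => ω ^ ((j : ℕ) * (k : ℕ))) =
      (∑ l : Fin n, c l * ω ^ ((j : ℕ) * (l : ℕ))) • fun k : Fin n => ω ^ ((j : ℕ) * (k : ℕ)) := by
  have hωj : (ω ^ (j : ℕ)) ^ n = 1 := by
    rw [← pow_mul, mul_comm, pow_mul, hω, one_pow]
  funext i
  show ∑ k, C i k * ω ^ ((j : ℕ) * (k : ℕ)) = _
  have step : ∀ k : Fin n, C i k * ω ^ ((j : ℕ) * (k : ℕ)) =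
      (fun k => c (k - i) * ω ^ ((j : ℕ) * (k : ℕ))) k := by
    intro k; rw [hC]
  rw [Finset.sum_congr rfl (fun k _ => step k),
    ← Equiv.sum_comp (Equiv.addLeft i) (fun k => c (k - i) * ω ^ ((j : ℕ) * (k : ℕ)))]
  have key : ∀ l : Fin n, c (Equiv.addLeft i l - i) * ω ^ ((j : ℕ) * ((Equiv.addLeft i l : Fin n) : ℕ))
      = (c l * ω ^ ((j : ℕ) * (l : ℕ))) * ω ^ ((j : ℕ) * (i : ℕ)) := by
    intro l
    have h1 : (Equiv.addLeft i l : Fin n) = i + l := rfl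
    rw [h1, add_sub_cancel_left]
    have h2 : ((i + l : Fin n) : ℕ) = ((i : ℕ) + (l : ℕ)) % n := Fin.val_add i l
    rw [h2, pow_mul, pow_mod_eq n _ hωj, pow_add, ← pow_mul, ← pow_mul]
    ring
  rw [Finset.sum_congr rfl (fun l _ => key l), ← Finset.sum_mul]
  show _ = (∑ l : Fin n, c l * ω ^ ((j : ℕ) * (l : ℕ))) * ω ^ ((j : ℕ) * (i : ℕ))
  rfl

lemma conjT_eigen (c : Fin n → ℂ) (C : Matrix (Fin n) (Fin n) ℂ)
    (hC : ∀ j k, C j k = c (k - j)) (μ : ℂ) (v : Fin n → ℂ) (hv : C *ᵥ v = μ • v) :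
    Cᴴ *ᵥ v = (starRingEnd ℂ) μ • v := by
  set N : Matrix (Fin n) (Fin n) ℂ := C - μ • 1 with hN
  have hNc : ∀ j k, N j k = (fun x => c x - if x = 0 then μ else 0) (k - j) := by
    intro j k
    simp only [hN, Matrix.sub_apply, Matrix.smul_apply, Matrix.one_apply, hC, smul_eq_mul]
    by_cases h : j = k
    · subst h; simp [sub_self]
    · rw [if_neg h, if_neg (sub_ne_zero.mpr (Ne.symm h)), mul_zero]
  have hnormal : N * Nᴴ = Nᴴ * N := circ_normal (fun x => c x - if x = 0 then μ else 0) N hNc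
  have hNv : N *ᵥ v = 0 := by
    rw [hN, Matrix.sub_mulVec, hv, Matrix.smul_mulVec, Matrix.one_mulVec, sub_self]
  set w : Fin n → ℂ := Nᴴ *ᵥ v with hw
  have hsum : ∑ i : Fin n, star (w i) * w i = 0 := by
    have h1 : star w ⬝ᵥ w = 0 := by
      rw [hw, Matrix.star_mulVec, Matrix.conjTranspose_conjTranspose,
        ← Matrix.dotProduct_mulVec, Matrix.mulVec_mulVec, hnormal,
        ← Matrix.mulVec_mulVec, hNv, Matrix.mulVec_zero, dotProduct_zero]
    simpa [dotProduct] using h1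
  have hw0 : w = 0 := by
    have hre : ∑ i : Fin n, Complex.normSq (w i) = 0 := by
      have : ((∑ i : Fin n, Complex.normSq (w i) : ℝ) : ℂ) = 0 := by
        push_cast
        rw [← hsum]
        refine Finset.sum_congr rfl fun i _ => ?_
        rw [Complex.normSq_eq_conj_mul_self]; rfl
      exact_mod_cast this
    funext i
    have := (Finset.sum_eq_zero_iff_of_nonneg (fun i _ => Complex.normSq_nonneg (w i))).mp hre i
      (Finset.mem_univ i)
    exact Complex.normSq_eq_zero.mp this
  have : Cᴴ *ᵥ v - (starRingEnd ℂ) μ • v = 0 := by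
    have h2 : Nᴴ = Cᴴ - (starRingEnd ℂ) μ • 1 := by
      rw [hN, Matrix.conjTranspose_sub, Matrix.conjTranspose_smul, Matrix.conjTranspose_one]; rfl
    rw [← hw0, hw, h2, Matrix.sub_mulVec, Matrix.smul_mulVec, Matrix.one_mulVec]
  exact sub_eq_zero.mp this
end

noncomputable def ww (m : ℕ) : ℂ := Complex.exp (2 * Real.pi * Complex.I / (m + 1))

lemma ww_prim (m : ℕ) : IsPrimitiveRoot (ww m) (m + 1) := by
  have h := Complex.isPrimitiveRoot_exp (m + 1) (Nat.succ_ne_zero m)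
  have : (((m : ℕ) + 1 : ℕ) : ℂ) = (m : ℂ) + 1 := by push_cast; ring
  simpa [ww, this] using h

lemma ww_pow (m : ℕ) : ww m ^ (m + 1) = 1 := (ww_prim m).pow_eq_one

lemma ww_ne (m : ℕ) : ww m ≠ 0 := Complex.exp_ne_zero _

lemma ww_tau_mul (m : ℕ) : ww m ^ m * ww m = 1 := by
  rw [← pow_succ, ww_pow]

lemma ww_star (m : ℕ) : (starRingEnd ℂ) (ww m) = ww m ^ m := by
  have habs : ‖ww m‖ = 1 := by
    have harg : (2 * (Real.pi : ℂ) * Complex.I / ((m : ℂ) + 1)) =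
        ((2 * Real.pi / ((m : ℝ) + 1) : ℝ) : ℂ) * Complex.I := by
      have hm : ((m : ℂ) + 1) ≠ 0 := by
        exact_mod_cast (Nat.cast_ne_zero (R := ℂ)).mpr (Nat.succ_ne_zero m)
      push_cast
      field_simp
    rw [ww, harg, Complex.norm_exp_ofReal_mul_I]
  have h1 : ww m * (starRingEnd ℂ) (ww m) = 1 := by
    rw [Complex.mul_conj]
    rw [Complex.normSq_eq_norm_sq, habs]
    norm_num
  have h2 : ww m * ww m ^ m = 1 := by rw [mul_comm]; exact ww_tau_mul m
  exact mul_left_cancel₀ (ww_ne m) (h1.trans h2.symm)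

-- x = ω^l * τ^k equals 1 iff l = k
lemma ww_cond1 (m : ℕ) (l k : Fin (m + 1)) :
    ww m ^ (l : ℕ) * (ww m ^ m) ^ (k : ℕ) = 1 ↔ l = k := by
  constructor
  · intro h
    have h2 : ww m ^ (l : ℕ) * ((ww m ^ m) ^ (k : ℕ) * ww m ^ (k : ℕ)) = ww m ^ (k : ℕ) := by
      rw [← mul_assoc, h, one_mul]
    rw [← mul_pow, ww_tau_mul, one_pow, mul_one] at h2
    exact Fin.ext ((ww_prim m).pow_inj l.isLt k.isLt h2)
  · rintro rfl
    rw [← mul_pow]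
    rw [mul_comm, ww_tau_mul, one_pow]

-- τ^l * τ^k = 1 iff l = -k
lemma ww_cond2 (m : ℕ) (l k : Fin (m + 1)) :
    (ww m ^ m) ^ (l : ℕ) * (ww m ^ m) ^ (k : ℕ) = 1 ↔ l = -k := by
  have key : (ww m ^ m) ^ ((l : ℕ) + (k : ℕ)) = 1 ↔ ww m ^ ((l : ℕ) + (k : ℕ)) = 1 := by
    constructor <;> intro h
    · have := congrArg (· * ww m ^ ((l : ℕ) + (k : ℕ))) h
      simp only [one_mul] at this
      rw [← mul_pow, ww_tau_mul, one_pow] at this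
      exact this.symm
    · have := congrArg (· * (ww m ^ m) ^ ((l : ℕ) + (k : ℕ))) h
      simp only [one_mul] at this
      rw [← mul_pow, mul_comm (ww m), ww_tau_mul, one_pow] at this
      exact this.symm
  rw [← pow_add, key, (ww_prim m).pow_eq_one_iff_dvd]
  rw [eq_neg_iff_add_eq_zero, Fin.ext_iff, Fin.val_add, Fin.val_zero,
    Nat.dvd_iff_mod_eq_zero]

lemma dft_inner (m : ℕ) (a : Fin (m + 1) → ℂ) (x : Fin (m + 1) → ℂ)
    (hx : ∀ l, x l ^ (m + 1) = 1) (k₀ : Fin (m + 1)) (hcond : ∀ l, x l = 1 ↔ l = k₀) :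
    ∑ j : Fin (m + 1), ∑ l : Fin (m + 1), a l * x l ^ (j : ℕ) = a k₀ * ((m + 1 : ℕ) : ℂ) := by
  rw [Finset.sum_comm]
  have h1 : ∀ l : Fin (m + 1), ∑ j : Fin (m + 1), a l * x l ^ (j : ℕ) =
      if l = k₀ then a l * ((m + 1 : ℕ) : ℂ) else 0 := by
    intro l
    rw [← Finset.mul_sum, sum_pow_eq_ite _ _ (hx l)]
    by_cases h : l = k₀
    · rw [if_pos ((hcond l).mpr h), if_pos h]
    · rw [if_neg (fun h1 => h ((hcond l).mp h1)), if_neg h, mul_zero]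
  rw [Finset.sum_congr rfl fun l _ => h1 l, Finset.sum_ite_eq' Finset.univ k₀
    (fun l => a l * ((m + 1 : ℕ) : ℂ)), if_pos (Finset.mem_univ _)]

lemma fin_sub_last (m : ℕ) (i : Fin m) :
    Fin.last m - Fin.castSucc i = ⟨m - (i : ℕ), by omega⟩ := by
  have key : (⟨m - (i : ℕ), by omega⟩ : Fin (m + 1)) + Fin.castSucc i = Fin.last m := by
    apply Fin.ext
    rw [Fin.val_add]
    simp only [Fin.coe_castSucc, Fin.val_last]
    have hi : (i : ℕ) < m := i.isLt
    rw [Nat.mod_eq_of_lt (by omega)]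
    omega
  exact (eq_sub_iff_add_eq.mpr key).symm

lemma key2_lemma (m : ℕ) (c : Fin (m + 1) → ℂ) :
    (∀ a b : Fin (m + 1), a ≠ 0 → b ≠ 0 →
        c a * (starRingEnd ℂ) (c b) = (starRingEnd ℂ) (c (-a)) * c (-b)) ↔
      (∃ α : ℂ, α ≠ 0 ∧ ∀ k : Fin (m + 1), k ≠ 0 →
        (starRingEnd ℂ) α * c k = α * (starRingEnd ℂ) (c (-k))) := by
  constructor
  · intro hP
    by_cases hall : ∀ k : Fin (m + 1), k ≠ 0 → c k = 0
    · refine ⟨1, one_ne_zero, fun k hk => ?_⟩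
      rw [hall k hk, hall (-k) (neg_ne_zero.mpr hk)]
      simp
    · push_neg at hall
      obtain ⟨a₀, ha₀, hca₀⟩ := hall
      have hcs : (starRingEnd ℂ) (c a₀) ≠ 0 := by
        simpa using hca₀
      set r : ℂ := c (-a₀) / (starRingEnd ℂ) (c a₀) with hr
      have hself := hP a₀ a₀ ha₀ ha₀
      have hcna₀ : c (-a₀) ≠ 0 := by
        intro h
        rw [h, mul_zero] at hself
        exact (mul_ne_zero hca₀ hcs) hself
      have hcsn : (starRingEnd ℂ) (c (-a₀)) ≠ 0 := by simpa using hcna₀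
      have hr0 : r ≠ 0 := div_ne_zero hcna₀ hcs
      have hrr : r * (starRingEnd ℂ) r = 1 := by
        rw [hr, map_div₀]
        rw [Complex.conj_conj]
        field_simp
        linear_combination -hself
      have hck : ∀ k : Fin (m + 1), k ≠ 0 → c k = (starRingEnd ℂ) (c (-k)) * r := by
        intro k hk
        have h := hP k a₀ hk ha₀
        rw [hr, mul_div_assoc']
        rw [eq_div_iff hcs]
        linear_combination h
      refine ⟨if r = -1 then Complex.I else 1 + r, ?_, ?_⟩
      · split_ifs with h
        · exact Complex.I_ne_zero
        · intro h0
          exact h (by linear_combination h0)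
      · intro k hk
        have hkey : (starRingEnd ℂ) (if r = -1 then Complex.I else 1 + r) * r =
            (if r = -1 then Complex.I else 1 + r) := by
          split_ifs with h
          · rw [Complex.conj_I, h]; ring
          · rw [map_add, _root_.map_one]
            linear_combination hrr
        rw [hck k hk]
        linear_combination (starRingEnd ℂ) (c (-k)) * hkey
  · rintro ⟨α, hα, hQ⟩ a b ha hb
    have h1 := hQ a ha
    have h2 : α * (starRingEnd ℂ) (c b) = (starRingEnd ℂ) α * c (-b) := by
      have := congrArg (starRingEnd ℂ) (hQ b hb)
      simpa using this
    have hαα : (starRingEnd ℂ) α * α ≠ 0 :=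
      mul_ne_zero (by simpa using hα) hα
    apply mul_left_cancel₀ hαα
    linear_combination (α * (starRingEnd ℂ) (c b)) * h1 +
      (α * (starRingEnd ℂ) (c (-a))) * h2
/-- The principal `(m × m)`-submatrix `C_m` (first `m` rows and columns) of an
`(m+1) × (m+1)` circulant matrix `C` is normal if and only if all the eigenvalues
of `C` lie on a straight line in the complex plane. -/
theorem circulant_submatrix_normal_iff_collinear (m : ℕ) (c : Fin (m + 1) → ℂ)
    (C : Matrix (Fin (m + 1)) (Fin (m + 1)) ℂ)
    (hC : ∀ j k : Fin (m + 1), C j k = c (k - j))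
    (Cm : Matrix (Fin m) (Fin m) ℂ)
    (hCm : Cm = C.submatrix Fin.castSucc Fin.castSucc) :
    Cm * Cm.conjTranspose = Cm.conjTranspose * Cm ↔
      ∃ α β : ℂ, α ≠ 0 ∧
        ∀ μ ∈ (Matrix.charpoly C).roots, ∃ t : ℝ, μ = α * (t : ℂ) + β := by
  have hnorm : C * Cᴴ = Cᴴ * C := circ_normal c C hC
  -- Step 1: normality of the submatrix as a condition on the coefficients
  have hentry : ∀ i j : Fin m, ((Cm * Cmᴴ) i j = (Cmᴴ * Cm) i j ↔
      c (Fin.last m - Fin.castSucc i) * (starRingEnd ℂ) (c (Fin.last m - Fin.castSucc j)) =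
        (starRingEnd ℂ) (c (-(Fin.last m - Fin.castSucc i))) *
          c (-(Fin.last m - Fin.castSucc j))) := by
    intro i j
    have hL : (Cm * Cmᴴ) i j +
        C (Fin.castSucc i) (Fin.last m) * (starRingEnd ℂ) (C (Fin.castSucc j) (Fin.last m)) =
        (C * Cᴴ) (Fin.castSucc i) (Fin.castSucc j) := by
      rw [Matrix.mul_apply, Matrix.mul_apply,
        Fin.sum_univ_castSucc (f := fun k => C (Fin.castSucc i) k * Cᴴ k (Fin.castSucc j))]
      congr 1
      · refine Finset.sum_congr rfl fun k _ => ?_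
        rw [hCm]
        simp [Matrix.submatrix_apply, Matrix.conjTranspose_apply, Complex.star_def]
    have hR : (Cmᴴ * Cm) i j +
        (starRingEnd ℂ) (C (Fin.last m) (Fin.castSucc i)) * C (Fin.last m) (Fin.castSucc j) =
        (Cᴴ * C) (Fin.castSucc i) (Fin.castSucc j) := by
      rw [Matrix.mul_apply, Matrix.mul_apply,
        Fin.sum_univ_castSucc (f := fun k => Cᴴ (Fin.castSucc i) k * C k (Fin.castSucc j))]
      congr 1
      · refine Finset.sum_congr rfl fun k _ => ?_
        rw [hCm]
        simp [Matrix.submatrix_apply, Matrix.conjTranspose_apply, Complex.star_def]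
    have hE : (C * Cᴴ) (Fin.castSucc i) (Fin.castSucc j) =
        (Cᴴ * C) (Fin.castSucc i) (Fin.castSucc j) := by rw [hnorm]
    constructor
    · intro h
      have h2 : C (Fin.castSucc i) (Fin.last m) * (starRingEnd ℂ) (C (Fin.castSucc j) (Fin.last m))
          = (starRingEnd ℂ) (C (Fin.last m) (Fin.castSucc i)) * C (Fin.last m) (Fin.castSucc j) :=
        by linear_combination hL - hR - h + hE
      simp only [hC] at h2
      rw [← neg_sub (Fin.last m) (Fin.castSucc i), ← neg_sub (Fin.last m) (Fin.castSucc j)] at h2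
      exact h2
    · intro h
      have h2 : C (Fin.castSucc i) (Fin.last m) * (starRingEnd ℂ) (C (Fin.castSucc j) (Fin.last m))
          = (starRingEnd ℂ) (C (Fin.last m) (Fin.castSucc i)) * C (Fin.last m) (Fin.castSucc j) := by
        simp only [hC]
        rw [← neg_sub (Fin.last m) (Fin.castSucc i), ← neg_sub (Fin.last m) (Fin.castSucc j)]
        exact h
      linear_combination hL - hR - h2 + hE
  have key1 : (Cm * Cmᴴ = Cmᴴ * Cm) ↔
      (∀ a b : Fin (m + 1), a ≠ 0 → b ≠ 0 →
        c a * (starRingEnd ℂ) (c b) = (starRingEnd ℂ) (c (-a)) * c (-b)) := by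
    constructor
    · intro hN a b ha hb
      have hva : (a : ℕ) ≠ 0 := fun h => ha (by apply Fin.ext; simpa using h)
      have hvb : (b : ℕ) ≠ 0 := fun h => hb (by apply Fin.ext; simpa using h)
      have hai : m - (a : ℕ) < m := by have := a.isLt; omega
      have hbi : m - (b : ℕ) < m := by have := b.isLt; omega
      have hia : Fin.last m - Fin.castSucc (⟨m - (a : ℕ), hai⟩ : Fin m) = a := by
        rw [fin_sub_last]
        apply Fin.ext
        simp only
        have := a.isLt; omega
      have hjb : Fin.last m - Fin.castSucc (⟨m - (b : ℕ), hbi⟩ : Fin m) = b := by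
        rw [fin_sub_last]
        apply Fin.ext
        simp only
        have := b.isLt; omega
      have h := (hentry ⟨m - (a : ℕ), hai⟩ ⟨m - (b : ℕ), hbi⟩).mp (by rw [hN])
      rwa [hia, hjb] at h
    · intro hP
      ext i j
      refine (hentry i j).mpr (hP _ _ ?_ ?_)
      · rw [fin_sub_last]
        intro h
        have h2 := congrArg Fin.val h
        simp at h2
        have := i.isLt
        omega
      · rw [fin_sub_last]
        intro h
        have h2 := congrArg Fin.val h
        simp at h2
        have := j.isLt
        omega
  rw [key1, key2_lemma m c]
  -- Step 2: the coefficient condition is equivalent to collinearity of eigenvalues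
  constructor
  · rintro ⟨α, hα, hQ⟩
    refine ⟨α, c 0, hα, ?_⟩
    intro μ hμ
    have hev : (Matrix.charpoly C).eval μ = 0 := (Polynomial.mem_roots'.mp hμ).2
    rw [eval_charpoly_det] at hev
    obtain ⟨v, hv0, hvz⟩ := Matrix.exists_mulVec_eq_zero_iff.mpr hev
    have hCv : C *ᵥ v = μ • v := by
      rw [Matrix.sub_mulVec, Matrix.smul_mulVec, Matrix.one_mulVec, sub_eq_zero] at hvz
      exact hvz.symm
    have hCT : Cᴴ *ᵥ v = (starRingEnd ℂ) μ • v := conjT_eigen c C hC μ v hCv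
    have hM : (starRingEnd ℂ) α • C - α • Cᴴ =
        ((starRingEnd ℂ) α * c 0 - α * (starRingEnd ℂ) (c 0)) • (1 : Matrix (Fin (m + 1)) (Fin (m + 1)) ℂ) := by
      ext j k
      simp only [Matrix.sub_apply, Matrix.smul_apply, Matrix.conjTranspose_apply, smul_eq_mul,
        Matrix.one_apply, hC, Complex.star_def]
      by_cases h : j = k
      · subst h
        rw [if_pos rfl, sub_self]
        ring
      · rw [if_neg h, mul_zero]
        have hkj : k - j ≠ 0 := sub_ne_zero.mpr (Ne.symm h)
        have hq := hQ (k - j) hkj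
        rw [neg_sub] at hq
        linear_combination hq
    have happ := congrArg (fun M => M *ᵥ v) hM
    simp only [Matrix.sub_mulVec, Matrix.smul_mulVec, Matrix.one_mulVec, hCv, hCT] at happ
    obtain ⟨i, hi⟩ := Function.ne_iff.mp hv0
    have hvi : v i ≠ 0 := by simpa using hi
    have heq : (starRingEnd ℂ) α * μ - α * (starRingEnd ℂ) μ =
        (starRingEnd ℂ) α * c 0 - α * (starRingEnd ℂ) (c 0) := by
      have h3 := congrFun happ i
      simp only [Pi.sub_apply, Pi.smul_apply, smul_eq_mul] at h3
      have h4 : ((starRingEnd ℂ) α * μ - α * (starRingEnd ℂ) μ) * v i =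
          ((starRingEnd ℂ) α * c 0 - α * (starRingEnd ℂ) (c 0)) * v i := by
        linear_combination h3
      exact mul_right_cancel₀ hvi h4
    set z : ℂ := (starRingEnd ℂ) α * (μ - c 0) with hz
    have hzr : (starRingEnd ℂ) z = z := by
      rw [hz, _root_.map_mul, _root_.map_sub, Complex.conj_conj]
      linear_combination -heq
    have hre : ((z.re : ℝ) : ℂ) = z := Complex.conj_eq_iff_re.mp hzr
    refine ⟨z.re / Complex.normSq α, ?_⟩
    have hmc : α * (starRingEnd ℂ) α = ((Complex.normSq α : ℝ) : ℂ) := Complex.mul_conj α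
    have hnz : ((Complex.normSq α : ℝ) : ℂ) ≠ 0 := by
      rw [← hmc]; exact mul_ne_zero hα (by simpa using hα)
    rw [Complex.ofReal_div, hre]
    field_simp
    linear_combination -α * hz - (μ - c 0) * hmc
  · rintro ⟨α, β, hα, hcol⟩
    refine ⟨α, hα, ?_⟩
    intro k hk
    have epow : ∀ (x : ℂ) (a b : ℕ), (x ^ a) ^ b = x ^ (b * a) := fun x a b => by
      rw [← pow_mul, Nat.mul_comm]
    have hx1 : ∀ a : ℕ, (ww m ^ a) ^ (m + 1) = 1 := fun a => by
      rw [pow_right_comm, ww_pow, one_pow]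
    have hμroot : ∀ j : Fin (m + 1),
        (∑ l : Fin (m + 1), c l * ww m ^ ((j : ℕ) * (l : ℕ))) ∈ (Matrix.charpoly C).roots := by
      intro j
      rw [Polynomial.mem_roots']
      refine ⟨(Matrix.charpoly_monic C).ne_zero, ?_⟩
      show (Matrix.charpoly C).eval _ = 0
      rw [eval_charpoly_det, ← Matrix.exists_mulVec_eq_zero_iff]
      refine ⟨fun k => ww m ^ ((j : ℕ) * (k : ℕ)), ?_, ?_⟩
      · intro h0
        have h1 := congrFun h0 0
        simp at h1
      · rw [Matrix.sub_mulVec, Matrix.smul_mulVec, Matrix.one_mulVec,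
          mulVec_eigen c C hC (ww m) (ww_pow m) j, sub_self]
    have hline : ∀ j : Fin (m + 1),
        (starRingEnd ℂ) α * (∑ l : Fin (m + 1), c l * ww m ^ ((j : ℕ) * (l : ℕ))) -
          α * (starRingEnd ℂ) (∑ l : Fin (m + 1), c l * ww m ^ ((j : ℕ) * (l : ℕ))) =
        (starRingEnd ℂ) α * β - α * (starRingEnd ℂ) β := by
      intro j
      obtain ⟨t, ht⟩ := hcol _ (hμroot j)
      rw [ht]
      simp only [_root_.map_add, _root_.map_mul, Complex.conj_ofReal]
      ring
    have hμstar : ∀ j : Fin (m + 1),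
        (starRingEnd ℂ) (∑ l : Fin (m + 1), c l * ww m ^ ((j : ℕ) * (l : ℕ))) =
        ∑ l : Fin (m + 1), (starRingEnd ℂ) (c l) * (ww m ^ m) ^ ((j : ℕ) * (l : ℕ)) := by
      intro j
      rw [_root_.map_sum]
      refine Finset.sum_congr rfl fun l _ => ?_
      rw [_root_.map_mul, _root_.map_pow, ww_star]
    have hperj : ∀ j : Fin (m + 1),
        (ww m ^ m) ^ ((j : ℕ) * (k : ℕ)) *
          ((starRingEnd ℂ) α * (∑ l : Fin (m + 1), c l * ww m ^ ((j : ℕ) * (l : ℕ))) -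
            α * (starRingEnd ℂ) (∑ l : Fin (m + 1), c l * ww m ^ ((j : ℕ) * (l : ℕ))) -
            ((starRingEnd ℂ) α * β - α * (starRingEnd ℂ) β)) =
        (starRingEnd ℂ) α *
            (∑ l : Fin (m + 1), c l * (ww m ^ (l : ℕ) * (ww m ^ m) ^ (k : ℕ)) ^ (j : ℕ)) -
          α * (∑ l : Fin (m + 1),
              (starRingEnd ℂ) (c l) * ((ww m ^ m) ^ (l : ℕ) * (ww m ^ m) ^ (k : ℕ)) ^ (j : ℕ)) -
          ((starRingEnd ℂ) α * β - α * (starRingEnd ℂ) β) * ((ww m ^ m) ^ (k : ℕ)) ^ (j : ℕ) := by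
      intro j
      have e1 : ∀ l : Fin (m + 1), c l * (ww m ^ (l : ℕ) * (ww m ^ m) ^ (k : ℕ)) ^ (j : ℕ) =
          (c l * ww m ^ ((j : ℕ) * (l : ℕ))) * (ww m ^ m) ^ ((j : ℕ) * (k : ℕ)) := by
        intro l
        rw [mul_pow, epow, epow]
        ring
      have e2 : ∀ l : Fin (m + 1),
          (starRingEnd ℂ) (c l) * ((ww m ^ m) ^ (l : ℕ) * (ww m ^ m) ^ (k : ℕ)) ^ (j : ℕ) =
          ((starRingEnd ℂ) (c l) * (ww m ^ m) ^ ((j : ℕ) * (l : ℕ))) *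
            (ww m ^ m) ^ ((j : ℕ) * (k : ℕ)) := by
        intro l
        rw [mul_pow, epow, epow]
        ring
      rw [Finset.sum_congr rfl fun l _ => e1 l, Finset.sum_congr rfl fun l _ => e2 l,
        ← Finset.sum_mul, ← Finset.sum_mul, ← hμstar j, epow (ww m ^ m) (k : ℕ) (j : ℕ)]
      ring
    have h0 : ∑ j : Fin (m + 1), (ww m ^ m) ^ ((j : ℕ) * (k : ℕ)) *
        ((starRingEnd ℂ) α * (∑ l : Fin (m + 1), c l * ww m ^ ((j : ℕ) * (l : ℕ))) -
          α * (starRingEnd ℂ) (∑ l : Fin (m + 1), c l * ww m ^ ((j : ℕ) * (l : ℕ))) -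
          ((starRingEnd ℂ) α * β - α * (starRingEnd ℂ) β)) = 0 :=
      Finset.sum_eq_zero fun j _ => by rw [sub_eq_zero.mpr (hline j), mul_zero]
    rw [Finset.sum_congr rfl fun j _ => hperj j, Finset.sum_sub_distrib,
      Finset.sum_sub_distrib, ← Finset.mul_sum, ← Finset.mul_sum, ← Finset.mul_sum] at h0
    rw [dft_inner m c (fun l => ww m ^ (l : ℕ) * (ww m ^ m) ^ (k : ℕ))
        (fun l => by rw [mul_pow, hx1, pow_right_comm, hx1]; simp) k (fun l => ww_cond1 m l k)] at h0
    rw [dft_inner m (fun l => (starRingEnd ℂ) (c l))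
        (fun l => (ww m ^ m) ^ (l : ℕ) * (ww m ^ m) ^ (k : ℕ))
        (fun l => by rw [mul_pow, pow_right_comm, hx1, pow_right_comm, hx1]; simp) (-k)
        (fun l => ww_cond2 m l k)] at h0
    have hS3 : ∑ j : Fin (m + 1), ((ww m ^ m) ^ (k : ℕ)) ^ ((j : Fin (m + 1)) : ℕ) = 0 := by
      rw [sum_pow_eq_ite _ _ (by rw [pow_right_comm, hx1, one_pow])]
      rw [if_neg]
      intro h1
      have hc := ww_cond2 m 0 k
      rw [Fin.val_zero, pow_zero, one_mul] at hc
      have h2 := hc.mp h1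
      rw [eq_comm, neg_eq_zero] at h2
      exact hk h2
    rw [hS3, mul_zero, sub_zero] at h0
    have hn : ((m + 1 : ℕ) : ℂ) ≠ 0 := Nat.cast_ne_zero.mpr (Nat.succ_ne_zero m)
    apply mul_right_cancel₀ hn
    linear_combination h0
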